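/- Let A = ⟨ℤₙ, {a, b}⟩ be a standardized DFA and let s, q satisfy 0 ≤ s ≤ ℓ−1 and 0 ≤ q ≤ n−1. Then the word w = a^{s+1} b^q satisfies excl(w) = {q} and q ⊕ d_s ∈ dupl(w), where d_s = d·aˢ. In particular, w has defect 1. -/
import Mathlib


/-- The action of a word on a state: `true` acts as the letter `a`, `false` acts as
the letter `b : q ↦ q + 1`. -/
def actAB (n : ℕ) (a : ZMod n → ZMod n) (q : ZMod n) (w : List Bool) : ZMod n :=
  w.foldl (fun p l => if l then a p else p + 1) q

lemma actAB_true (n : ℕ) (a : ZMod n → ZMod n) (k : ℕ) (p : ZMod n) :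
    actAB n a p (List.replicate k true) = a^[k] p := by
  induction k generalizing p with
  | zero => rfl
  | succ k ih =>
    rw [List.replicate_succ]
    show actAB n a (a p) (List.replicate k true) = _
    rw [ih, Function.iterate_succ_apply]

lemma actAB_false (n : ℕ) (a : ZMod n → ZMod n) (k : ℕ) (p : ZMod n) :
    actAB n a p (List.replicate k false) = p + (k : ZMod n) := by
  induction k generalizing p with
  | zero => simp; rfl
  | succ k ih =>
    rw [List.replicate_succ]
    show actAB n a (p + 1) (List.replicate k false) = _
    rw [ih]
    push_cast
    ring

lemma actAB_key (n : ℕ) (a : ZMod n → ZMod n) (s q : ℕ) (p : ZMod n) :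
    actAB n a p (List.replicate (s + 1) true ++ List.replicate q false)
      = a^[s + 1] p + (q : ZMod n) := by
  unfold actAB
  rw [List.foldl_append]
  rw [← actAB, ← actAB, actAB_true, actAB_false]

lemma range_iter (n : ℕ) (a : ZMod n → ZMod n)
    (hexcl : Set.range a = {(0 : ZMod n)}ᶜ)
    (r : ZMod n) (hr : r ≠ 0) (hra : a r = a 0) (k : ℕ) :
    Set.range (a^[k + 1]) = {(0 : ZMod n)}ᶜ := by
  induction k with
  | zero => simpa using hexcl
  | succ k ih =>
    ext x
    constructor
    · rintro ⟨p, rfl⟩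
      have : a (a^[k+1] p) ∈ Set.range a := ⟨_, rfl⟩
      rw [hexcl] at this
      simpa [Function.iterate_succ_apply'] using this
    · intro hx
      have hx' : x ∈ Set.range (a^[k+1]) := ih ▸ hx
      obtain ⟨p, rfl⟩ := hx'
      have main : ∀ p : ZMod n, p ≠ 0 → a^[k+1] p ∈ Set.range (a^[k+1+1]) := by
        intro p hp
        have hp' : p ∈ Set.range a := by rw [hexcl]; exact hp
        obtain ⟨u, rfl⟩ := hp'
        exact ⟨u, by rw [Function.iterate_succ_apply]⟩
      rcases eq_or_ne p 0 with rfl | hp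
      · have : a^[k+1] (0 : ZMod n) = a^[k+1] r := by
          rw [Function.iterate_succ_apply, Function.iterate_succ_apply, hra]
        rw [this]
        exact main r hr
      · exact main p hp

/-- In a standardized DFA, for `0 ≤ s ≤ ℓ-1` and `0 ≤ q ≤ n-1`, the word
`w = a^(s+1) b^q` satisfies `excl(w) = {q}` and `q ⊕ d_s ∈ dupl(w)`; in particular
`w` has defect 1. -/
theorem stmt9 (n : ℕ) (hn : 2 ≤ n) (a : ZMod n → ZMod n)
    (hexcl : Set.range a = {(0 : ZMod n)}ᶜ)
    (hdupl : ∀ p : ZMod n,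
      (∃ q₁ q₂ : ZMod n, q₁ ≠ q₂ ∧ a q₁ = p ∧ a q₂ = p) ↔ p = a 0)
    (r : ZMod n) (hr : r ≠ 0) (hra : a r = a 0)
    (ℓ : ℕ) (hℓ1 : 1 ≤ ℓ) (hℓr : a^[ℓ - 1] (a 0) = r)
    (hℓmin : ∀ m : ℕ, 1 ≤ m → a^[m - 1] (a 0) = r → ℓ ≤ m)
    (s q : ℕ) (hs : s < ℓ) (hq : q < n) :
    (Set.range fun p =>
        actAB n a p (List.replicate (s + 1) true ++ List.replicate q false))ᶜ
        = {(q : ZMod n)} ∧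
    ((q : ZMod n) + a^[s] (a 0)) ∈
      {p : ZMod n | ∃ q₁ q₂ : ZMod n, q₁ ≠ q₂ ∧
        actAB n a q₁ (List.replicate (s + 1) true ++ List.replicate q false) = p ∧
        actAB n a q₂ (List.replicate (s + 1) true ++ List.replicate q false) = p} := by
  have hkey := actAB_key n a s q
  have hrange := range_iter n a hexcl r hr hra s
  constructor
  · ext x
    simp only [Set.mem_compl_iff, Set.mem_range, Set.mem_singleton_iff, hkey]
    constructor
    · intro h
      by_contra hxq
      have hx0 : x - (q : ZMod n) ≠ 0 := sub_ne_zero.mpr hxq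
      have : x - (q : ZMod n) ∈ Set.range (a^[s+1]) := by
        rw [hrange]; exact hx0
      obtain ⟨p, hp⟩ := this
      exact h ⟨p, by rw [hp]; ring⟩
    · rintro rfl ⟨p, hp⟩
      have : a^[s+1] p = 0 := by
        have := sub_eq_zero.mpr hp
        simpa using this
      have hmem : a^[s+1] p ∈ Set.range (a^[s+1]) := ⟨p, rfl⟩
      rw [hrange] at hmem
      exact hmem this
  · refine ⟨0, r, Ne.symm hr, ?_, ?_⟩
    · rw [hkey, Function.iterate_succ_apply]; ring
    · rw [hkey, Function.iterate_succ_apply, hra]; ring
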